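/- Let G = (C, R) be a finite strongly connected directed graph on m vertices with positive edge labels κ and Laplacian A_κ. Then there exists R₀ > 0 such that z^⊤ A_κ e^z < 0 for all z ∈ ℝ^m with ∑_{i=1}^m z_i = 0 and |z| ≥ R₀. -/

import Mathlib

set_option maxHeartbeats 1000000

private noncomputable def Tseq (C : ℝ) : ℕ → ℝ
  | 0 => 0
  | k + 1 => Tseq C k + (1 + C * Real.exp (Tseq C k) * (Tseq C k + 1))

private lemma Tseq_nonneg (C : ℝ) (hC : 0 ≤ C) : ∀ k, 0 ≤ Tseq C k
  | 0 => le_refl 0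
  | k + 1 => by
      have h1 := Tseq_nonneg C hC k
      have h2 : (0:ℝ) ≤ C * Real.exp (Tseq C k) * (Tseq C k + 1) := by
        have := (Real.exp_pos (Tseq C k)).le
        have : (0:ℝ) ≤ Tseq C k + 1 := by linarith
        positivity
      show (0:ℝ) ≤ Tseq C k + (1 + C * Real.exp (Tseq C k) * (Tseq C k + 1))
      linarith

private lemma Tseq_mono (C : ℝ) (hC : 0 ≤ C) : Monotone (Tseq C) := by
  apply monotone_nat_of_le_succ
  intro k
  have h1 := Tseq_nonneg C hC k
  have h2 : (0:ℝ) ≤ C * Real.exp (Tseq C k) * (Tseq C k + 1) := by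
    have := (Real.exp_pos (Tseq C k)).le
    have : (0:ℝ) ≤ Tseq C k + 1 := by linarith
    positivity
  show Tseq C k ≤ Tseq C k + (1 + C * Real.exp (Tseq C k) * (Tseq C k + 1))
  linarith

private lemma cross_edge {α : Type*} {r : α → α → Prop} {S : α → Prop} :
    ∀ {a b : α}, Relation.ReflTransGen r a b → S a → ¬ S b →
      ∃ p q, S p ∧ ¬ S q ∧ r p q := by
  intro a b h
  induction h with
  | refl => intro hS hnS; exact absurd hS hnS
  | @tail b c h₁ h₂ ih =>
      intro hS hnS
      by_cases hb : S b
      · exact ⟨b, c, hb, hnS, h₂⟩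
      · exact ih hS hb

private lemma mul3_le {a b c A B C : ℝ} (ha0 : 0 ≤ a) (ha : a ≤ A) (hb0 : 0 ≤ b)
    (hb : b ≤ B) (hc0 : 0 ≤ c) (hc : c ≤ C) : a * b * c ≤ A * B * C := by
  have h1 : a * b ≤ A * B := mul_le_mul ha hb hb0 (ha0.trans ha)
  exact mul_le_mul h1 hc hc0 (mul_nonneg (ha0.trans ha) (hb0.trans hb))

/-- Let `(C, R)` be a finite strongly connected digraph on `m ≥ 2` vertices without
self-loops, with positive edge labels `κ`. Then there is `R₀ > 0` such that for every
`z ∈ ℝ^m` with `∑ i, z i = 0` and Euclidean norm `|z| ≥ R₀` one has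
`z^⊤ A_κ e^z = ∑_{(i,j)∈R} e^{z_i} κ_{ij} (z_j − z_i) < 0`. -/
theorem stmt_8 (m : ℕ) (hm : 2 ≤ m) (R : Finset (Fin m × Fin m))
    (hloop : ∀ e ∈ R, e.1 ≠ e.2)
    (hconn : ∀ i j : Fin m, Relation.ReflTransGen (fun a b => (a, b) ∈ R) i j)
    (κ : Fin m × Fin m → ℝ) (hκ : ∀ e ∈ R, 0 < κ e) :
    ∃ R₀ > (0 : ℝ), ∀ z : EuclideanSpace ℝ (Fin m), (∑ i, z i = 0) → R₀ ≤ ‖z‖ →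
      ∑ e ∈ R, Real.exp (z e.1) * κ e * (z e.2 - z e.1) < 0 := by
  classical
  have hm0 : 0 < m := by omega
  have hm1 : 1 < m := by omega
  set i0 : Fin m := ⟨0, by omega⟩
  set i1 : Fin m := ⟨1, by omega⟩
  have h01 : i0 ≠ i1 := by simp [i0, i1]
  -- R is nonempty
  have hR : R.Nonempty := by
    rcases (hconn i0 i1).cases_head with h | ⟨c, hc, _⟩
    · exact absurd h h01
    · exact ⟨(i0, c), hc⟩
  set κmin := R.inf' hR κ with hκmin_def
  set κmax := R.sup' hR κ with hκmax_def
  have hκmin_pos : 0 < κmin := (Finset.lt_inf'_iff hR).mpr hκ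
  have hκmax_pos : 0 < κmax := by
    obtain ⟨e, he⟩ := hR
    exact lt_of_lt_of_le (hκ e he) (Finset.le_sup' κ he)
  have hminmax : κmin ≤ κmax := by
    obtain ⟨e, he⟩ := hR
    exact le_trans (Finset.inf'_le κ he) (Finset.le_sup' κ he)
  set C : ℝ := (R.card : ℝ) * κmax / κmin with hC_def
  have hC : 0 ≤ C := by positivity
  set T : ℕ → ℝ := Tseq C with hT_def
  have hTnn : ∀ k, 0 ≤ T k := Tseq_nonneg C hC
  have hTmono : Monotone T := Tseq_mono C hC
  have hTm1 : (0:ℝ) < T m + 1 := by linarith [hTnn m]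
  have hsm : (0:ℝ) < Real.sqrt m := Real.sqrt_pos.mpr (by exact_mod_cast hm0)
  refine ⟨Real.sqrt m * (T m + 1), by positivity, ?_⟩
  intro z hsum hz
  -- max vertex
  obtain ⟨istar, -, hMmax⟩ := Finset.exists_max_image Finset.univ z ⟨i0, Finset.mem_univ i0⟩
  set M := z istar with hM_def
  have hMmax' : ∀ i, z i ≤ M := fun i => hMmax i (Finset.mem_univ i)
  -- min vertex
  obtain ⟨imin, -, hmin⟩ := Finset.exists_min_image Finset.univ z ⟨i0, Finset.mem_univ i0⟩
  have hmin' : ∀ i, z imin ≤ z i := fun i => hmin i (Finset.mem_univ i)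
  have hM0 : 0 ≤ M := by
    have h1 : ∑ i, z i ≤ Finset.univ.card • M :=
      Finset.sum_le_card_nsmul _ _ _ (fun i _ => hMmax' i)
    rw [hsum, Finset.card_univ, Fintype.card_fin, nsmul_eq_mul] at h1
    have hm' : (1:ℝ) ≤ (m:ℝ) := by exact_mod_cast hm0
    nlinarith
  have hmin0 : z imin ≤ 0 := by
    have h1 : Finset.univ.card • z imin ≤ ∑ i, z i :=
      Finset.card_nsmul_le_sum _ _ _ (fun i _ => hmin' i)
    rw [hsum, Finset.card_univ, Fintype.card_fin, nsmul_eq_mul] at h1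
    have hm' : (1:ℝ) ≤ (m:ℝ) := by exact_mod_cast hm0
    nlinarith
  -- some coordinate is large in absolute value
  obtain ⟨ia, -, hia⟩ := Finset.exists_max_image Finset.univ (fun i => |z i|) ⟨i0, Finset.mem_univ i0⟩
  have hnormle : ‖z‖ ≤ Real.sqrt m * |z ia| := by
    rw [EuclideanSpace.norm_eq]
    have h1 : ∑ i, ‖z i‖ ^ 2 ≤ (m : ℝ) * |z ia| ^ 2 := by
      have := Finset.sum_le_card_nsmul Finset.univ (fun i => ‖z i‖ ^ 2) (|z ia| ^ 2)
        (fun i _ => by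
          have := hia i (Finset.mem_univ i)
          simp only [Real.norm_eq_abs]
          exact pow_le_pow_left₀ (abs_nonneg _) this 2)
      simpa [Finset.card_univ, nsmul_eq_mul] using this
    calc Real.sqrt (∑ i, ‖z i‖ ^ 2) ≤ Real.sqrt ((m : ℝ) * |z ia| ^ 2) :=
          Real.sqrt_le_sqrt h1
      _ = Real.sqrt m * |z ia| := by
          rw [Real.sqrt_mul (Nat.cast_nonneg m), Real.sqrt_sq_eq_abs, abs_abs]
  have hbig : T m + 1 ≤ |z ia| :=
    (mul_le_mul_iff_right₀ hsm).mp (hz.trans hnormle)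
  have hlow : z imin ≤ M - (T m + 1) := by
    rcases le_or_gt 0 (z ia) with h | h
    · have : T m + 1 ≤ M := by
        rw [abs_of_nonneg h] at hbig
        exact hbig.trans (hMmax' ia)
      linarith
    · have : z imin ≤ -(T m + 1) := by
        rw [abs_of_neg h] at hbig
        have := hmin' ia
        linarith
      linarith
  -- pigeonhole: an empty interval
  have hkex : ∃ k ∈ Finset.Icc 1 m, ∀ i, ¬ (M - T k ≤ z i ∧ z i < M - T (k - 1)) := by
    by_contra hcon
    push_neg at hcon
    have hwit : ∀ k : ℕ, ∃ i : Fin m,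
        k ∈ Finset.Icc 1 m → (M - T k ≤ z i ∧ z i < M - T (k - 1)) := by
      intro k
      by_cases hk : k ∈ Finset.Icc 1 m
      · obtain ⟨i, hi⟩ := hcon k hk
        exact ⟨i, fun _ => hi⟩
      · exact ⟨i0, fun h => absurd h hk⟩
    choose f hf using hwit
    have hmaps : ∀ k ∈ Finset.Icc 1 m, f k ∈ Finset.univ.erase istar := by
      intro k hk
      refine Finset.mem_erase.mpr ⟨?_, Finset.mem_univ _⟩
      intro heq
      have h2 := (hf k hk).2
      rw [heq] at h2
      have := hTnn (k - 1)
      simp only [← hM_def] at h2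
      linarith
    have hcard : (Finset.univ.erase istar).card < (Finset.Icc 1 m).card := by
      rw [Finset.card_erase_of_mem (Finset.mem_univ _), Finset.card_univ,
        Fintype.card_fin, Nat.card_Icc]
      omega
    obtain ⟨x, hx, y, hy, hxy, hfxy⟩ :=
      Finset.exists_ne_map_eq_of_card_lt_of_maps_to hcard hmaps
    rcases hxy.lt_or_gt with hlt | hlt
    · have h1 := (hf x hx).1
      have h2 := (hf y hy).2
      rw [hfxy] at h1
      have : T x ≤ T (y - 1) := hTmono (by omega)
      linarith
    · have h1 := (hf y hy).1
      have h2 := (hf x hx).2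
      rw [← hfxy] at h1
      have : T y ≤ T (x - 1) := hTmono (by omega)
      linarith
  obtain ⟨k, hkIcc, hkempty⟩ := hkex
  rw [Finset.mem_Icc] at hkIcc
  obtain ⟨k', rfl⟩ : ∃ k', k = k' + 1 := ⟨k - 1, by omega⟩
  set t := T k' with ht_def
  have htnn : 0 ≤ t := hTnn k'
  set c : ℝ := 1 + C * Real.exp t * (t + 1) with hc_def
  have hTk : T (k' + 1) = t + c := rfl
  have hc_pos : 0 < c := by
    rw [hc_def]
    have h1 : (0:ℝ) ≤ C * Real.exp t * (t + 1) :=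
      mul_nonneg (mul_nonneg hC (Real.exp_pos t).le) (by linarith)
    linarith
  have hkempty' : ∀ i, ¬ (M - (t + c) ≤ z i ∧ z i < M - t) := by
    intro i
    have := hkempty i
    rw [hTk] at this
    simpa using this
  -- crossing edge
  set S : Fin m → Prop := fun i => M - t ≤ z i with hS_def
  have hSstar : S istar := by simp [S, ← hM_def]; linarith
  have hSmin : ¬ S imin := by
    simp only [S, not_le]
    have h1 : t ≤ T m := hTmono (by omega)
    linarith
  obtain ⟨p, q, hpS, hqS, hpq⟩ := cross_edge (hconn istar imin) hSstar hSmin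
  simp only [S, not_le] at hpS hqS
  have hqlow : z q < M - (t + c) := by
    rcases lt_or_ge (z q) (M - (t + c)) with h | h
    · exact h
    · exact absurd ⟨h, hqS⟩ (hkempty' q)
  -- bound the crossing term
  have hκpq : κmin ≤ κ (p, q) := Finset.inf'_le κ hpq
  have hterm_pq : Real.exp (z (p, q).1) * κ (p, q) * (z (p, q).2 - z (p, q).1)
      ≤ -(κmin * Real.exp (M - t) * c) := by
    simp only
    have hd : z q - z p ≤ -c := by linarith
    have he : Real.exp (M - t) ≤ Real.exp (z p) := Real.exp_le_exp.mpr (by linarith)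
    have hep := Real.exp_pos (z p)
    have hemt := Real.exp_pos (M - t)
    have h1 : Real.exp (z p) * κ (p, q) * (z q - z p)
        ≤ Real.exp (z p) * κ (p, q) * (-c) :=
      mul_le_mul_of_nonneg_left hd (mul_pos hep (hκ _ hpq)).le
    have h2 := mul3_le hemt.le he hκmin_pos.le hκpq hc_pos.le (le_refl c)
    nlinarith [h1, h2]
  -- bound all other terms
  set P : ℝ := κmax * Real.exp M * (t + 1) with hP_def
  have hP0 : 0 ≤ P := by positivity
  have hother : ∀ e ∈ R.erase (p, q),
      Real.exp (z e.1) * κ e * (z e.2 - z e.1) ≤ P := by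
    intro e he
    have heR := Finset.mem_of_mem_erase he
    have hκe : 0 < κ e := hκ e heR
    have hκemax : κ e ≤ κmax := Finset.le_sup' κ heR
    rcases le_or_gt (z e.2) (z e.1) with h | h
    · have : Real.exp (z e.1) * κ e * (z e.2 - z e.1) ≤ 0 := by
        apply mul_nonpos_of_nonneg_of_nonpos
        · positivity
        · linarith
      linarith
    · rcases le_or_gt (M - t) (z e.1) with h1 | h1
      · have hd : z e.2 - z e.1 ≤ t := by
          have := hMmax' e.2; linarith
        have he1 : Real.exp (z e.1) ≤ Real.exp M := Real.exp_le_exp.mpr (hMmax' e.1)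
        have := mul3_le (Real.exp_pos (z e.1)).le he1 hκe.le hκemax (by linarith) hd
        calc Real.exp (z e.1) * κ e * (z e.2 - z e.1) ≤ Real.exp M * κmax * t := this
          _ ≤ P := by rw [hP_def]; nlinarith [Real.exp_pos M]
      · -- use x ≤ exp x
        set d := z e.2 - z e.1 with hd_def
        have hd0 : 0 < d := by simp [hd_def]; linarith
        have hde : d ≤ Real.exp d := by
          have := Real.add_one_le_exp d; linarith
        have key : Real.exp (z e.1) * d ≤ Real.exp M := by
          calc Real.exp (z e.1) * d ≤ Real.exp (z e.1) * Real.exp d :=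
                mul_le_mul_of_nonneg_left hde (Real.exp_pos _).le
            _ = Real.exp (z e.1 + d) := (Real.exp_add _ _).symm
            _ ≤ Real.exp M := Real.exp_le_exp.mpr (by simp [hd_def]; linarith [hMmax' e.2])
        calc Real.exp (z e.1) * κ e * d = κ e * (Real.exp (z e.1) * d) := by ring
          _ ≤ κmax * Real.exp M := by
              apply mul_le_mul hκemax key (by positivity) hκmax_pos.le
          _ ≤ P := by rw [hP_def]; nlinarith [Real.exp_pos M, mul_pos hκmax_pos (Real.exp_pos M)]
  -- sum bound
  have hsum_erase : ∑ e ∈ R.erase (p, q), Real.exp (z e.1) * κ e * (z e.2 - z e.1)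
      ≤ (R.card : ℝ) * P := by
    have h1 := Finset.sum_le_card_nsmul (R.erase (p, q)) _ P hother
    rw [nsmul_eq_mul] at h1
    refine h1.trans ?_
    have h2 : ((R.erase (p, q)).card : ℝ) ≤ (R.card : ℝ) := by
      exact_mod_cast Finset.card_erase_le
    exact mul_le_mul_of_nonneg_right h2 hP0
  -- combine
  rw [← Finset.add_sum_erase R _ hpq]
  have hkey : κmin * Real.exp (M - t) * c
      = κmin * Real.exp (M - t) + (R.card : ℝ) * P := by
    have hCmul : κmin * C = (R.card : ℝ) * κmax := by
      rw [hC_def]; field_simp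
    have hexp : Real.exp (M - t) * Real.exp t = Real.exp M := by
      rw [← Real.exp_add]; ring_nf
    have : κmin * Real.exp (M - t) * c
        = κmin * Real.exp (M - t)
          + (κmin * C) * (Real.exp (M - t) * Real.exp t) * (t + 1) := by
      rw [hc_def]; ring
    rw [this, hCmul, hexp, hP_def]; ring
  have hpos : 0 < κmin * Real.exp (M - t) := by positivity
  linarith [hterm_pq, hsum_erase]
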